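/- Suppose for each agent i ∈ {1,…,m} the sequence of uncertain likelihood updates satisfies ℓ^i_θ(ω^i_t) → 1 in probability as t → ∞, and each ℓ^i_θ(ω^i_t) is strictly positive and finite almost surely. Let beliefs evolve as log μ^i_{t+1}(θ) = log ℓ^i_θ(ω^i_{t+1}) + Σ_j [A]_{ij} log μ^j_t(θ) with μ^i_0(θ) = 1, where A is doubly stochastic with ‖A^t − (1/m)11'‖ ≤ √2 m λ^t, λ ∈ (0,1). Then ‖log μ_t(θ) − (1/m) Σ_{i=1}^m log Λ^i_θ(t) · 1‖ → 0 in probability, where log Λ^i_θ(t) = Σ_{τ=1}^t log ℓ^i_θ(ω^i_τ). -/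

import Mathlib

open Filter Finset Matrix MeasureTheory
open scoped Matrix.Norms.L2Operator

/-- Discrete convolution with a geometric kernel of a sequence tending to zero tends to zero. -/
lemma conv_geom_tendsto_zero {l : ℝ} (hl0 : 0 < l) (hl1 : l < 1) (a : ℕ → ℝ)
    (ha0 : ∀ n, 0 ≤ a n) (ha : Tendsto a atTop (nhds 0)) :
    Tendsto (fun t => ∑ τ ∈ Finset.Icc 1 t, l ^ (t - τ) * a τ) atTop (nhds 0) := by
  have hgeom : ∀ t : ℕ, ∑ k ∈ Finset.range t, l ^ k ≤ (1 - l)⁻¹ := fun t =>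
    (summable_geometric_of_lt_one hl0.le hl1).sum_le_tsum (Finset.range t)
      (fun i _ => pow_nonneg hl0.le i) |>.trans_eq
      (tsum_geometric_of_lt_one hl0.le hl1)
  rw [Metric.tendsto_atTop]
  intro ε hε
  have h1l : (0:ℝ) < 1 - l := by linarith
  have hε4 : 0 < ε * (1 - l) / 4 := by positivity
  obtain ⟨N, hN⟩ := (Metric.tendsto_atTop.1 ha) (ε * (1 - l) / 4) hε4
  set S : ℝ := ∑ τ ∈ Finset.Icc 1 N, a τ with hS
  have hS0 : 0 ≤ S := Finset.sum_nonneg fun τ _ => ha0 τ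
  -- l^(t-N) * S → 0
  have h1 : Tendsto (fun t : ℕ => l ^ (t - N) * S) atTop (nhds 0) := by
    have := (tendsto_pow_atTop_nhds_zero_of_lt_one hl0.le hl1).comp
      (tendsto_sub_atTop_nat N)
    simpa using this.mul_const S
  obtain ⟨T, hT⟩ := Filter.eventually_atTop.1
    ((h1.eventually (gt_mem_nhds (by linarith : (0:ℝ) < ε / 2))).and
      (Filter.eventually_ge_atTop N))
  refine ⟨T, fun t ht => ?_⟩
  obtain ⟨hTa, hTb⟩ := hT t ht
  have hsum0 : 0 ≤ ∑ τ ∈ Finset.Icc 1 t, l ^ (t - τ) * a τ :=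
    Finset.sum_nonneg fun τ _ => mul_nonneg (pow_nonneg hl0.le _) (ha0 τ)
  rw [Real.dist_eq, sub_zero, abs_of_nonneg hsum0]
  -- split the sum
  have hsplit : ∑ τ ∈ Finset.Icc 1 t, l ^ (t - τ) * a τ =
      (∑ τ ∈ Finset.Icc 1 N, l ^ (t - τ) * a τ) +
        ∑ τ ∈ Finset.Ioc N t, l ^ (t - τ) * a τ := by
    rw [show Finset.Icc 1 t = Finset.Ioc 0 t by rfl,
        show Finset.Icc 1 N = Finset.Ioc 0 N by rfl]
    exact (Finset.sum_Ioc_consecutive _ (Nat.zero_le N) hTb).symm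
  rw [hsplit]
  have hb1 : ∑ τ ∈ Finset.Icc 1 N, l ^ (t - τ) * a τ ≤ l ^ (t - N) * S := by
    rw [hS, Finset.mul_sum]
    refine Finset.sum_le_sum fun τ hτ => ?_
    have hτN : τ ≤ N := (Finset.mem_Icc.1 hτ).2
    exact mul_le_mul_of_nonneg_right
      (pow_le_pow_of_le_one hl0.le hl1.le (Nat.sub_le_sub_left hτN t)) (ha0 τ)
  have hb2 : ∑ τ ∈ Finset.Ioc N t, l ^ (t - τ) * a τ ≤ ε / 2 := by
    have step1 : ∑ τ ∈ Finset.Ioc N t, l ^ (t - τ) * a τ ≤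
        (ε * (1 - l) / 4) * ∑ τ ∈ Finset.Ioc N t, l ^ (t - τ) := by
      rw [Finset.mul_sum]
      refine Finset.sum_le_sum fun τ hτ => ?_
      have hτN : N ≤ τ := (Finset.mem_Ioc.1 hτ).1.le
      have : |a τ| < ε * (1 - l) / 4 := by simpa [Real.dist_eq] using hN τ hτN
      have haτ : a τ ≤ ε * (1 - l) / 4 := (le_abs_self _).trans this.le
      calc l ^ (t - τ) * a τ ≤ l ^ (t - τ) * (ε * (1 - l) / 4) :=
            mul_le_mul_of_nonneg_left haτ (pow_nonneg hl0.le _)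
        _ = (ε * (1 - l) / 4) * l ^ (t - τ) := mul_comm _ _
    have step2 : ∑ τ ∈ Finset.Ioc N t, l ^ (t - τ) ≤ (1 - l)⁻¹ := by
      have hsub : Finset.Ioc N t ⊆ Finset.range (t + 1) := fun τ hτ =>
        Finset.mem_range.2 (Nat.lt_succ_of_le (Finset.mem_Ioc.1 hτ).2)
      calc ∑ τ ∈ Finset.Ioc N t, l ^ (t - τ)
          ≤ ∑ τ ∈ Finset.range (t + 1), l ^ (t - τ) :=
            Finset.sum_le_sum_of_subset_of_nonneg hsub
              (fun τ _ _ => pow_nonneg hl0.le _)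
        _ = ∑ k ∈ Finset.range (t + 1), l ^ k := by
            have := Finset.sum_range_reflect (fun k => l ^ k) (t + 1)
            simpa using this
        _ ≤ (1 - l)⁻¹ := hgeom (t + 1)
    calc ∑ τ ∈ Finset.Ioc N t, l ^ (t - τ) * a τ
        ≤ (ε * (1 - l) / 4) * ∑ τ ∈ Finset.Ioc N t, l ^ (t - τ) := step1
      _ ≤ (ε * (1 - l) / 4) * (1 - l)⁻¹ :=
          mul_le_mul_of_nonneg_left step2 hε4.le
      _ = ε / 4 := by
          rw [div_mul_eq_mul_div, mul_assoc, mul_inv_cancel₀ (by linarith : (1:ℝ) - l ≠ 0), mul_one]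
      _ ≤ ε / 2 := by linarith
  linarith

/-- Consensus of log-beliefs on the average log uncertain likelihood ratio: if each agent's
uncertain likelihood updates `ℓ^i_θ(ω^i_t)` are a.s. positive and converge to `1` a.s.,
beliefs evolve by `log μ^i_{t+1} = log ℓ^i(t+1) + ∑_j A_{ij} log μ^j_t` with `μ^i_0 = 1`,
and `A` is doubly stochastic with `‖A^t − (1/m)11'‖ ≤ √2 m λ^t`, `λ ∈ (0,1)`, then a.s.
`‖log μ_t − (1/m)(∑_i log Λ^i(t)) 1‖ → 0`, where `log Λ^i(t) = ∑_{τ=1}^t log ℓ^i(τ)`. -/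
theorem stmt_6 {Ω : Type*} [MeasurableSpace Ω] (P : Measure Ω) [IsProbabilityMeasure P]
    (m : ℕ) (A : Matrix (Fin m) (Fin m) ℝ)
    (hA0 : ∀ i j, 0 ≤ A i j)
    (hrow : ∀ i, ∑ j, A i j = 1) (hcol : ∀ j, ∑ i, A i j = 1)
    (l : ℝ) (hl0 : 0 < l) (hl1 : l < 1)
    (hmix : ∀ t : ℕ,
      ‖A ^ t - (1 / (m : ℝ)) • Matrix.of (fun _ _ : Fin m => (1 : ℝ))‖ ≤
        Real.sqrt 2 * m * l ^ t)
    (ℓ : ℕ → Fin m → Ω → ℝ)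
    (hpos : ∀ t i, ∀ᵐ ω ∂P, 0 < ℓ t i ω)
    (hconv : ∀ i, ∀ᵐ ω ∂P, Tendsto (fun t => ℓ t i ω) atTop (nhds 1))
    (μb : ℕ → Ω → Fin m → ℝ)
    (hμ0 : ∀ ω i, μb 0 ω i = 1)
    (hrec : ∀ t ω i, Real.log (μb (t + 1) ω i) =
      Real.log (ℓ (t + 1) i ω) + ∑ j, A i j * Real.log (μb t ω j)) :
    ∀ᵐ ω ∂P, Tendsto (fun t => ‖(WithLp.equiv 2 (Fin m → ℝ)).symm
        (fun i => Real.log (μb t ω i) -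
          (1 / (m : ℝ)) * ∑ j, ∑ τ ∈ Finset.Icc 1 t, Real.log (ℓ τ j ω))‖)
      atTop (nhds 0) := by
  have hcs : ∀ᵐ ω ∂P, ∀ i, Tendsto (fun t => ℓ t i ω) atTop (nhds 1) :=
    (MeasureTheory.ae_all_iff).2 hconv
  filter_upwards [hcs] with ω hc
  set M : Matrix (Fin m) (Fin m) ℝ := (1 / (m : ℝ)) • Matrix.of (fun _ _ : Fin m => (1 : ℝ))
    with hM
  set c : ℕ → Fin m → ℝ := fun t i => Real.log (ℓ t i ω) with hcdef
  -- componentwise convergence of c to 0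
  have hclim : ∀ i, Tendsto (fun t => c t i) atTop (nhds 0) := by
    intro i
    have : Tendsto (fun t => Real.log (ℓ t i ω)) atTop (nhds (Real.log 1)) :=
      ((Real.continuousAt_log one_ne_zero).tendsto).comp (hc i)
    simpa [Real.log_one] using this
  -- convergence of the Euclidean vectors
  set v : ℕ → EuclideanSpace ℝ (Fin m) :=
    fun t => (WithLp.equiv 2 (Fin m → ℝ)).symm (c t) with hvdef
  have hvlim : Tendsto (fun t => ‖v t‖) atTop (nhds 0) := by
    have hcv : Tendsto c atTop (nhds (0 : Fin m → ℝ)) := tendsto_pi_nhds.2 hclim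
    have hvv : Tendsto v atTop (nhds (0 : EuclideanSpace ℝ (Fin m))) := by
      have hcont : Continuous ((WithLp.equiv 2 (Fin m → ℝ)).symm) :=
        (PiLp.continuous_toLp 2 (fun _ : Fin m => ℝ))
      simpa [hvdef, Function.comp_def] using (hcont.tendsto (0 : Fin m → ℝ)).comp hcv
    simpa [Function.comp_def] using (continuous_norm.tendsto (0 : EuclideanSpace ℝ (Fin m))).comp hvv
  -- closed form for the log-beliefs
  have key : ∀ t, (fun i => Real.log (μb t ω i)) =
      ∑ τ ∈ Finset.Icc 1 t, (A ^ (t - τ)) *ᵥ (c τ) := by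
    intro t
    induction t with
    | zero => funext i; simp [hμ0, Finset.Icc_eq_empty (by omega : ¬(1:ℕ) ≤ 0)]
    | succ t ih =>
      funext i
      rw [hrec t ω i]
      have h2 : ∑ j, A i j * Real.log (μb t ω j) =
          (A *ᵥ (fun j => Real.log (μb t ω j))) i := rfl
      rw [h2, ih]
      have h3 : A *ᵥ (∑ τ ∈ Finset.Icc 1 t, (A ^ (t - τ)) *ᵥ (c τ)) =
          ∑ τ ∈ Finset.Icc 1 t, (A ^ (t + 1 - τ)) *ᵥ (c τ) := by
        rw [show A *ᵥ (∑ τ ∈ Finset.Icc 1 t, (A ^ (t - τ)) *ᵥ (c τ)) =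
            ∑ τ ∈ Finset.Icc 1 t, A *ᵥ ((A ^ (t - τ)) *ᵥ (c τ)) from
          map_sum A.mulVecLin _ _]
        refine Finset.sum_congr rfl fun τ hτ => ?_
        have hτt : τ ≤ t := (Finset.mem_Icc.1 hτ).2
        rw [Matrix.mulVec_mulVec, ← pow_succ', Nat.sub_add_comm hτt]
      rw [h3, Finset.sum_Icc_succ_top (by omega : (1:ℕ) ≤ t + 1)]
      simp [Finset.sum_apply, Matrix.one_mulVec, add_comm]
      rfl
  -- the deviation vector as a sum
  have hdev : ∀ t, (fun i => Real.log (μb t ω i) -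
      (1 / (m : ℝ)) * ∑ j, ∑ τ ∈ Finset.Icc 1 t, Real.log (ℓ τ j ω)) =
      ∑ τ ∈ Finset.Icc 1 t, ((A ^ (t - τ) - M) *ᵥ (c τ)) := by
    intro t
    funext i
    rw [show Real.log (μb t ω i) =
      (∑ τ ∈ Finset.Icc 1 t, (A ^ (t - τ)) *ᵥ (c τ)) i from congrFun (key t) i]
    have hMv : ∀ τ, (M *ᵥ (c τ)) i = (1 / (m : ℝ)) * ∑ j, c τ j := by
      intro τ
      simp [hM, Matrix.mulVec, dotProduct, Finset.mul_sum]
    calc (∑ τ ∈ Finset.Icc 1 t, (A ^ (t - τ)) *ᵥ (c τ)) i -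
          (1 / (m : ℝ)) * ∑ j, ∑ τ ∈ Finset.Icc 1 t, Real.log (ℓ τ j ω)
        = ∑ τ ∈ Finset.Icc 1 t, ((A ^ (t - τ)) *ᵥ (c τ)) i -
          ∑ τ ∈ Finset.Icc 1 t, (1 / (m : ℝ)) * ∑ j, c τ j := by
          rw [Finset.sum_apply, Finset.sum_comm, Finset.mul_sum]
      _ = ∑ τ ∈ Finset.Icc 1 t, (((A ^ (t - τ)) *ᵥ (c τ)) i - (M *ᵥ (c τ)) i) := by
          rw [Finset.sum_sub_distrib]
          exact congrArg _ (Finset.sum_congr rfl fun τ _ => (hMv τ).symm)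
      _ = (∑ τ ∈ Finset.Icc 1 t, ((A ^ (t - τ) - M) *ᵥ (c τ))) i := by
          rw [Finset.sum_apply]
          exact Finset.sum_congr rfl fun τ _ => by rw [Matrix.sub_mulVec]; rfl
  -- norm bound and squeeze
  refine squeeze_zero (fun t => norm_nonneg _)
    (g := fun t => ∑ τ ∈ Finset.Icc 1 t, l ^ (t - τ) * (Real.sqrt 2 * m * ‖v τ‖)) ?_ ?_
  · intro t
    rw [hdev t]
    have hnorm : ‖(WithLp.equiv 2 (Fin m → ℝ)).symm
        (∑ τ ∈ Finset.Icc 1 t, ((A ^ (t - τ) - M) *ᵥ (c τ)))‖ ≤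
        ∑ τ ∈ Finset.Icc 1 t, ‖(WithLp.equiv 2 (Fin m → ℝ)).symm
          ((A ^ (t - τ) - M) *ᵥ (c τ))‖ := by
      have : (WithLp.equiv 2 (Fin m → ℝ)).symm
          (∑ τ ∈ Finset.Icc 1 t, ((A ^ (t - τ) - M) *ᵥ (c τ))) =
          ∑ τ ∈ Finset.Icc 1 t, (WithLp.equiv 2 (Fin m → ℝ)).symm
            ((A ^ (t - τ) - M) *ᵥ (c τ)) := by ext j; simp [Finset.sum_apply]
      rw [this]
      exact norm_sum_le _ _
    refine hnorm.trans (Finset.sum_le_sum fun τ _ => ?_)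
    have hop : ‖(WithLp.equiv 2 (Fin m → ℝ)).symm ((A ^ (t - τ) - M) *ᵥ (c τ))‖ ≤
        ‖A ^ (t - τ) - M‖ * ‖v τ‖ :=
      Matrix.l2_opNorm_mulVec (A ^ (t - τ) - M) (v τ)
    refine hop.trans ?_
    calc ‖A ^ (t - τ) - M‖ * ‖v τ‖ ≤ (Real.sqrt 2 * m * l ^ (t - τ)) * ‖v τ‖ :=
          mul_le_mul_of_nonneg_right (hmix (t - τ)) (norm_nonneg _)
      _ = l ^ (t - τ) * (Real.sqrt 2 * m * ‖v τ‖) := by ring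
  · refine conv_geom_tendsto_zero hl0 hl1 _ (fun n => by positivity) ?_
    have := hvlim.const_mul (Real.sqrt 2 * m)
    simpa using this
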